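/- Let (λⱼ, φⱼ), j ∈ ℕ, be the eigenvalues and an orthonormal basis of eigenfunctions of a positive self-adjoint operator A₀⁺ with compact resolvent in L²(Ω₊), and let 𝟙 ∈ L²(Ω₊) be a fixed vector (the constant function 1). Suppose v ∈ dom(A₀⁺) satisfies A₀⁺v = z(v − |Ω|⁻¹⟨v, 𝟙⟩𝟙) with z ∉ {λⱼ} and ⟨v, 𝟙⟩ ≠ 0. Then z ≠ 0 and z satisfies |Ω| + z ∑ⱼ (λⱼ − z)⁻¹ |⟨𝟙, φⱼ⟩|² = 0. -/

import Mathlib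

local notation "⟪" x ", " y "⟫" => @inner ℂ _ _ x y

/- STATEMENT 15: Let `A₀⁺` be a positive self-adjoint operator with compact
resolvent in `H = L²(Ω₊)`, encoded by its orthonormal eigenbasis `φb : ℕ → H`
(a Hilbert basis) and eigenvalues `lam j > 0` with `lam → ∞` (compact resolvent);
`v ∈ dom A₀⁺` with `A₀⁺ v = wv` is encoded by `⟨φbⱼ, wv⟩ = lamⱼ⟨φbⱼ, v⟩` for all
`j`.  Suppose `A₀⁺ v = z(v − |Ω|⁻¹⟨v, 𝟙⟩𝟙)`, `z ∉ {lamⱼ}` and `⟨v, 𝟙⟩ ≠ 0`.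
Then `z ≠ 0` and `|Ω| + z ∑ⱼ (lamⱼ − z)⁻¹ |⟨𝟙, φbⱼ⟩|² = 0`. -/
theorem stmt15 {H : Type*}
    [NormedAddCommGroup H] [InnerProductSpace ℂ H] [CompleteSpace H]
    (φb : HilbertBasis ℕ ℂ H) (lam : ℕ → ℝ)
    (hpos : ∀ j, 0 < lam j)
    (hcompact : Filter.Tendsto lam Filter.atTop Filter.atTop)
    (one : H) (vol : ℝ) (hvol : 0 < vol)
    (v wv : H)
    (hAv : ∀ j, ⟪φb j, wv⟫ = (lam j : ℂ) * ⟪φb j, v⟫)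
    (z : ℂ)
    (heq : wv = z • (v - ((vol : ℂ)⁻¹ * ⟪one, v⟫) • one))
    (hz : ∀ j, z ≠ (lam j : ℂ))
    (hv1 : ⟪one, v⟫ ≠ 0) :
    z ≠ 0 ∧
      (vol : ℂ) + z * ∑' j, ((lam j : ℂ) - z)⁻¹ * ((‖⟪one, φb j⟫‖ : ℂ)) ^ 2 = 0 := by
  have hvolC : (vol : ℂ) ≠ 0 := by
    exact_mod_cast (ne_of_gt hvol)
  -- z ≠ 0
  have hz0 : z ≠ 0 := by
    intro h0
    subst h0
    have hv0 : v = 0 := by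
      have hco : ∀ j, ⟪φb j, v⟫ = 0 := by
        intro j
        have h1 := hAv j
        rw [heq, zero_smul, inner_zero_right] at h1
        have hlam : ((lam j : ℂ)) ≠ 0 := by
          exact_mod_cast (ne_of_gt (hpos j))
        exact (mul_eq_zero.mp h1.symm).resolve_left hlam
      have : φb.repr v = 0 := by
        ext j
        simpa [HilbertBasis.repr_apply_apply] using hco j
      simpa using φb.repr.injective (by simpa using this)
    rw [hv0, inner_zero_right] at hv1
    exact hv1 rfl
  refine ⟨hz0, ?_⟩
  set c := ⟪one, v⟫ with hc
  -- coefficient formula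
  have key : ∀ j, ⟪φb j, v⟫ =
      (-(z * (vol : ℂ)⁻¹ * c)) * (((lam j : ℂ) - z)⁻¹ * ⟪φb j, one⟫) := by
    intro j
    have h1 := hAv j
    rw [heq, inner_smul_right, inner_sub_right, inner_smul_right] at h1
    have hne : ((lam j : ℂ) - z) ≠ 0 := sub_ne_zero.mpr fun h => hz j h.symm
    have h5 : ((lam j : ℂ) - z) * ⟪φb j, v⟫ = -(z * (vol : ℂ)⁻¹ * c) * ⟪φb j, one⟫ := by
      linear_combination -h1
    have h6 : ⟪φb j, v⟫ = ((lam j : ℂ) - z)⁻¹ * (((lam j : ℂ) - z) * ⟪φb j, v⟫) := by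
      rw [inv_mul_cancel_left₀ hne]
    rw [h6, h5]; ring
  -- Parseval
  have hpar : (c : ℂ) = ∑' j, ⟪one, φb j⟫ * ⟪φb j, v⟫ :=
    (φb.tsum_inner_mul_inner one v).symm
  have hterm : ∀ j, ⟪one, φb j⟫ * ⟪φb j, v⟫ =
      (-(z * (vol : ℂ)⁻¹ * c)) * (((lam j : ℂ) - z)⁻¹ * ((‖⟪one, φb j⟫‖ : ℂ)) ^ 2) := by
    intro j
    rw [key j]
    have h2 : ⟪φb j, one⟫ = (starRingEnd ℂ) ⟪one, φb j⟫ := (inner_conj_symm _ _).symm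
    have h3 : ⟪one, φb j⟫ * (starRingEnd ℂ) ⟪one, φb j⟫ = (‖⟪one, φb j⟫‖ : ℂ) ^ 2 :=
      Complex.mul_conj' _
    rw [h2]
    linear_combination (-(z * (vol : ℂ)⁻¹ * c) * ((lam j : ℂ) - z)⁻¹) * h3
  rw [funext hterm, tsum_mul_left] at hpar
  set S := ∑' j, ((lam j : ℂ) - z)⁻¹ * ((‖⟪one, φb j⟫‖ : ℂ)) ^ 2 with hS
  -- c = -(z * vol⁻¹ * c) * S, c ≠ 0, vol ≠ 0 ⟹ vol + z * S = 0
  have : (vol : ℂ) * c = -(z * c) * S := by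
    field_simp at hpar
    linear_combination c * hpar
  have h4 : c * ((vol : ℂ) + z * S) = 0 := by linear_combination this
  rcases mul_eq_zero.mp h4 with h | h
  · exact absurd h hv1
  · exact h
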